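/- For every integer r ≥ 1 and every s = (s₁,…,s_r) ∈ ℂ^r satisfying Re(s_j + s_{j+1} + ⋯ + s_r) > r − j + 1 for all 1 ≤ j ≤ r, the multiple series Σ_{n₁≥1} ⋯ Σ_{n_r≥1} n₁^{−s₁} (n₁+n₂)^{−s₂} ⋯ (n₁+⋯+n_r)^{−s_r} converges absolutely (i.e., the family of terms is summable). -/

import Mathlib

/-- The general term of the Euler–Zagier multiple series:
for exponents `s : Fin r → ℂ` and increments `n : Fin r → ℕ+`, the term is
`∏_j (n₁ + ⋯ + n_{j+1})^{-s_j}`, i.e. the summand over `0 < m₁ < m₂ < ⋯ < m_r`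
written via the substitution `m_j = n₁ + ⋯ + n_j`. -/
noncomputable def eulerZagierTerm {r : ℕ} (s : Fin r → ℂ) (n : Fin r → ℕ+) : ℂ :=
  ∏ j : Fin r, (((∑ i ∈ Finset.Iic j, (n i : ℕ)) : ℂ) ^ (-(s j)))

/-- Abel-summation positivity: if all tail sums of `a` (within `range r`) are
nonnegative and `x` is nonnegative at `0` and nondecreasing, then
`∑_{k<r} a k * x k ≥ 0`. -/
private lemma abel_nonneg : ∀ (r : ℕ) (a x : ℕ → ℝ),
    (∀ k, k < r → 0 ≤ ∑ i ∈ Finset.Ico k r, a i) → 0 ≤ x 0 →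
    (∀ k, x k ≤ x (k + 1)) → 0 ≤ ∑ k ∈ Finset.range r, a k * x k := by
  intro r
  induction r with
  | zero => intro a x _ _ _; simp
  | succ r ih =>
    intro a x ha hx0 hxm
    have key : ∑ k ∈ Finset.range (r + 1), a k * x k
        = (∑ k ∈ Finset.range (r + 1), a k) * x 0
          + (∑ k ∈ Finset.range r, a (k + 1) * (x (k + 1) - x 0)
             + a 0 * (x 0 - x 0)) := by
      calc ∑ k ∈ Finset.range (r + 1), a k * x k
          = ∑ k ∈ Finset.range (r + 1), (a k * x 0 + a k * (x k - x 0)) :=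
            Finset.sum_congr rfl fun k _ => by ring
        _ = (∑ k ∈ Finset.range (r + 1), a k) * x 0
            + ∑ k ∈ Finset.range (r + 1), a k * (x k - x 0) := by
            rw [Finset.sum_add_distrib, Finset.sum_mul]
        _ = _ := by rw [Finset.sum_range_succ' (fun k => a k * (x k - x 0)) r]
    rw [key]
    have h1 : 0 ≤ (∑ k ∈ Finset.range (r + 1), a k) * x 0 := by
      apply mul_nonneg _ hx0
      have := ha 0 (by omega)
      rwa [← Finset.range_eq_Ico] at this
    have h2 : 0 ≤ ∑ k ∈ Finset.range r, a (k + 1) * (x (k + 1) - x 0) := by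
      apply ih (fun k => a (k + 1)) (fun k => x (k + 1) - x 0)
      · intro k hk
        have he : ∑ i ∈ Finset.Ico k r, a (i + 1)
            = ∑ i ∈ Finset.Ico (k + 1) (r + 1), a i := by
          rw [Finset.sum_Ico_eq_sum_range, Finset.sum_Ico_eq_sum_range]
          simp only [Nat.add_sub_add_right]
          exact Finset.sum_congr rfl fun i _ => by congr 1; omega
        rw [he]
        exact ha (k + 1) (by omega)
      · have := hxm 0; linarith
      · intro k; have := hxm (k + 1); linarith
    linarith

/-- Summability of a finite product of copies of a nonnegative summable function,
over the pi type `Fin r → ℕ+`. -/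
private lemma summable_pi_prod (f : ℕ+ → ℝ) (hf0 : ∀ x, 0 ≤ f x) (hf : Summable f) :
    ∀ r : ℕ, Summable (fun n : Fin r → ℕ+ => ∏ j, f (n j)) := by
  intro r
  induction r with
  | zero => exact Summable.of_finite
  | succ r ih =>
    have hg0 : (0 : (Fin r → ℕ+) → ℝ) ≤ fun n => ∏ j, f (n j) := by
      intro m; exact Finset.prod_nonneg fun j _ => hf0 _
    have hf0' : (0 : ℕ+ → ℝ) ≤ f := fun x => hf0 x
    have h2 : Summable (fun p : ℕ+ × (Fin r → ℕ+) => f p.1 * ∏ j, f (p.2 j)) :=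
      Summable.mul_of_nonneg (g := fun n : Fin r → ℕ+ => ∏ j, f (n j)) hf ih hf0' hg0
    let e : ℕ+ × (Fin r → ℕ+) ≃ (Fin (r + 1) → ℕ+) :=
      { toFun := fun p => Fin.cons p.1 p.2
        invFun := fun m => (m 0, Fin.tail m)
        left_inv := fun p => by simp
        right_inv := fun m => by simp }
    refine (e.summable_iff (f := fun m : Fin (r + 1) → ℕ+ => ∏ j, f (m j))).mp ?_
    refine h2.congr fun p => ?_
    show f p.1 * ∏ j, f (p.2 j)
        = ∏ j : Fin (r + 1), f ((Fin.cons p.1 p.2 : Fin (r + 1) → ℕ+) j)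
    rw [Fin.prod_univ_succ]
    simp

theorem statement0 (r : ℕ) (hr : 1 ≤ r) (s : Fin r → ℂ)
    (hs : ∀ j : Fin r, ((r : ℝ) - (j : ℕ)) < (∑ i ∈ Finset.Ici j, s i).re) :
    Summable (fun n : Fin r → ℕ+ => eulerZagierTerm s n) := by
  classical
  -- real parts, extended to ℕ
  set σ : ℕ → ℝ := fun k => if h : k < r then (s ⟨k, h⟩).re else 0 with hσdef
  set T : ℕ → ℝ := fun k => ∑ i ∈ Finset.Ico k r, σ i with hTdef
  -- translate the hypothesis to tail sums of σ
  have hT : ∀ k, k < r → (r : ℝ) - k < T k := by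
    intro k hk
    have h1 := hs ⟨k, hk⟩
    have hicc : Finset.Ico k r = Finset.Icc k (r - 1) := by
      rw [← Finset.Ico_add_one_right_eq_Icc]
      congr 1
      omega
    have h2 : (∑ i ∈ Finset.Ici (⟨k, hk⟩ : Fin r), s i).re = T k := by
      have hcongr : ∀ i ∈ Finset.Ici (⟨k, hk⟩ : Fin r), (s i).re = σ (i : ℕ) := by
        intro i _
        simp [hσdef, i.isLt]
      calc (∑ i ∈ Finset.Ici (⟨k, hk⟩ : Fin r), s i).re
          = ∑ i ∈ Finset.Ici (⟨k, hk⟩ : Fin r), σ (i : ℕ) := by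
            rw [Complex.re_sum]; exact Finset.sum_congr rfl hcongr
        _ = ∑ m ∈ (Finset.Ici (⟨k, hk⟩ : Fin r)).map Fin.valEmbedding, σ m :=
            (Finset.sum_map (Finset.Ici (⟨k, hk⟩ : Fin r)) Fin.valEmbedding σ).symm
        _ = ∑ m ∈ Finset.Icc k (r - 1), σ m := by
            rw [Fin.map_valEmbedding_Ici]; show ∑ m ∈ Finset.Ico k r, σ m = _; rw [hicc]
        _ = ∑ m ∈ Finset.Ico k r, σ m := by rw [hicc]
        _ = T k := rfl
    rw [← h2]
    exact_mod_cast h1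
  -- choose δ > 0 with (r-k)(1+δ) ≤ T k for all k < r
  have hne : (Finset.univ : Finset (Fin r)).Nonempty := ⟨⟨0, hr⟩, Finset.mem_univ _⟩
  set ε : ℝ := Finset.univ.inf' hne (fun j : Fin r => T (j : ℕ) - ((r : ℝ) - (j : ℕ)))
    with hεdef
  have hε : 0 < ε := by
    rw [hεdef, Finset.lt_inf'_iff]
    intro j _
    have := hT (j : ℕ) j.isLt
    linarith
  set δ : ℝ := ε / r with hδdef
  have hrpos : (0 : ℝ) < r := by exact_mod_cast hr
  have hδ : 0 < δ := div_pos hε hrpos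
  have hc : ∀ k, k < r → ((r : ℝ) - k) * (1 + δ) ≤ T k := by
    intro k hk
    have h1 : ε ≤ T k - ((r : ℝ) - k) :=
      Finset.inf'_le _ (Finset.mem_univ (⟨k, hk⟩ : Fin r))
    have h2 : ((r : ℝ) - k) * δ ≤ ε := by
      have hkr : ((r : ℝ) - k) ≤ r := by
        have : (0 : ℝ) ≤ k := Nat.cast_nonneg k
        linarith
      calc ((r : ℝ) - k) * δ ≤ r * δ := mul_le_mul_of_nonneg_right hkr hδ.le
        _ = ε := by
          rw [hδdef, mul_div_assoc', mul_comm, mul_div_assoc, div_self hrpos.ne', mul_one]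
    nlinarith
  -- the dominating summable function
  have hfsum : Summable (fun x : ℕ+ => ((x : ℕ) : ℝ) ^ (-(1 + δ))) := by
    have h0 : Summable (fun N : ℕ => (N : ℝ) ^ (-(1 + δ))) :=
      Real.summable_nat_rpow.mpr (by linarith)
    exact h0.comp_injective PNat.coe_injective
  have hg : Summable (fun n : Fin r → ℕ+ => ∏ j, ((n j : ℕ) : ℝ) ^ (-(1 + δ))) :=
    summable_pi_prod _ (fun x => Real.rpow_nonneg (Nat.cast_nonneg _) _) hfsum r
  -- reduce to a termwise bound
  apply Summable.of_norm
  refine Summable.of_nonneg_of_le (fun m => norm_nonneg _) ?_ hg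
  intro n
  -- partial sums
  set ν : ℕ → ℕ := fun m => if h : m < r then (n ⟨m, h⟩ : ℕ) else 0 with hνdef
  set mN : ℕ → ℕ := fun k => ∑ m ∈ Finset.range k, ν m with hmNdef
  have h0r : 0 < r := hr
  have hν0 : (1 : ℕ) ≤ ν 0 := by
    simp only [hνdef, dif_pos h0r]
    exact (n ⟨0, h0r⟩).property
  have hmN1 : ∀ k, 1 ≤ mN (k + 1) := by
    intro k
    calc 1 ≤ ν 0 := hν0
      _ ≤ mN (k + 1) :=
        Finset.single_le_sum (f := ν) (fun i _ => Nat.zero_le _)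
          (Finset.mem_range.mpr (by omega))
  have hmNpos : ∀ k, (0 : ℝ) < (mN (k + 1) : ℝ) := by
    intro k; exact_mod_cast hmN1 k
  have hmono : ∀ k, mN k ≤ mN (k + 1) := fun k =>
    Finset.sum_le_sum_of_subset (Finset.range_subset_range.mpr (by omega))
  have hmval : ∀ j : Fin r, (∑ i ∈ Finset.Iic j, (n i : ℕ)) = mN ((j : ℕ) + 1) := by
    intro j
    have hIic : Finset.Iic (j : ℕ) = Finset.range ((j : ℕ) + 1) := by
      ext m; simp [Nat.lt_succ_iff]
    calc ∑ i ∈ Finset.Iic j, (n i : ℕ)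
        = ∑ i ∈ Finset.Iic j, ν (i : ℕ) := by
          refine Finset.sum_congr rfl fun i _ => ?_
          simp [hνdef, i.isLt]
      _ = ∑ m ∈ (Finset.Iic j).map Fin.valEmbedding, ν m :=
          (Finset.sum_map (Finset.Iic j) Fin.valEmbedding ν).symm
      _ = ∑ m ∈ Finset.Iic (j : ℕ), ν m := by rw [Fin.map_valEmbedding_Iic]
      _ = mN ((j : ℕ) + 1) := by rw [hIic, hmNdef]
  -- logs of the partial sums
  set x : ℕ → ℝ := fun k => Real.log (mN (k + 1)) with hxdef
  have hx0 : 0 ≤ x 0 := Real.log_nonneg (by exact_mod_cast hmN1 0)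
  have hxm : ∀ k, x k ≤ x (k + 1) := fun k =>
    Real.log_le_log (hmNpos k) (by exact_mod_cast hmono (k + 1))
  -- products as exponentials
  have hprod_exp : ∀ c : ℕ → ℝ,
      ∏ k ∈ Finset.range r, ((mN (k + 1) : ℝ)) ^ (c k)
        = Real.exp (∑ k ∈ Finset.range r, c k * x k) := by
    intro c
    rw [Real.exp_sum]
    refine Finset.prod_congr rfl fun k _ => ?_
    rw [Real.rpow_def_of_pos (hmNpos k), mul_comm]
  -- the norm of the term
  have hnorm : ‖eulerZagierTerm s n‖
      = ∏ k ∈ Finset.range r, ((mN (k + 1) : ℝ)) ^ (-(σ k)) := by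
    rw [eulerZagierTerm, norm_prod,
      ← Fin.prod_univ_eq_prod_range (fun k => ((mN (k + 1) : ℝ)) ^ (-(σ k))) r]
    refine Finset.prod_congr rfl fun j _ => ?_
    rw [show (∑ i ∈ Finset.Iic j, ((n i : ℕ) : ℂ))
        = (((∑ i ∈ Finset.Iic j, (n i : ℕ)) : ℕ) : ℂ) from (Nat.cast_sum _ _).symm,
      hmval j, Complex.norm_natCast_cpow_of_pos (hmN1 (j : ℕ)), Complex.neg_re]
    congr 2
    simp [hσdef, j.isLt]
  -- Abel-summation comparison of exponents
  have habel : 0 ≤ ∑ k ∈ Finset.range r, (σ k - (1 + δ)) * x k := by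
    refine abel_nonneg r (fun k => σ k - (1 + δ)) x ?_ hx0 hxm
    intro k hk
    have hsum : ∑ i ∈ Finset.Ico k r, (σ i - (1 + δ))
        = T k - ((r : ℝ) - k) * (1 + δ) := by
      rw [Finset.sum_sub_distrib, Finset.sum_const, Nat.card_Ico, nsmul_eq_mul,
        Nat.cast_sub hk.le, hTdef]
    rw [hsum]
    have := hc k hk
    linarith
  have hlex : ∑ k ∈ Finset.range r, (-(σ k)) * x k
      ≤ ∑ k ∈ Finset.range r, (-(1 + δ)) * x k := by
    have hdiff : ∑ k ∈ Finset.range r, (-(1 + δ)) * x k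
        - ∑ k ∈ Finset.range r, (-(σ k)) * x k
        = ∑ k ∈ Finset.range r, (σ k - (1 + δ)) * x k := by
      rw [← Finset.sum_sub_distrib]
      exact Finset.sum_congr rfl fun k _ => by ring
    linarith
  -- assemble the bound
  calc ‖eulerZagierTerm s n‖
      = Real.exp (∑ k ∈ Finset.range r, (-(σ k)) * x k) := by
        rw [hnorm, hprod_exp (fun k => -(σ k))]
    _ ≤ Real.exp (∑ k ∈ Finset.range r, (-(1 + δ)) * x k) := Real.exp_le_exp.mpr hlex
    _ = ∏ k ∈ Finset.range r, ((mN (k + 1) : ℝ)) ^ (-(1 + δ)) :=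
        (hprod_exp fun _ => -(1 + δ)).symm
    _ ≤ ∏ k ∈ Finset.range r, ((ν k : ℝ)) ^ (-(1 + δ)) := by
        refine Finset.prod_le_prod (fun k _ => Real.rpow_nonneg (Nat.cast_nonneg _) _) ?_
        intro k hk
        have hkr : k < r := Finset.mem_range.mp hk
        have hνpos : (0 : ℝ) < (ν k : ℝ) := by
          have : (1 : ℕ) ≤ ν k := by
            simp only [hνdef, dif_pos hkr]
            exact (n ⟨k, hkr⟩).one_le
          exact_mod_cast this
        have hle : (ν k : ℝ) ≤ (mN (k + 1) : ℝ) := by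
          exact_mod_cast Finset.single_le_sum (f := ν) (fun i _ => Nat.zero_le _)
            (Finset.mem_range.mpr (by omega))
        exact Real.rpow_le_rpow_of_nonpos hνpos hle (by linarith)
    _ = ∏ j : Fin r, ((n j : ℕ) : ℝ) ^ (-(1 + δ)) := by
        rw [← Fin.prod_univ_eq_prod_range (fun k => ((ν k : ℝ)) ^ (-(1 + δ))) r]
        refine Finset.prod_congr rfl fun j _ => ?_
        simp [hνdef, j.isLt]
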